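/- In the finite persuasion setting (Ω, M, A finite, p₀ full-support, payoffs u_R, u_S), define BP = sup over kernels π : Ω → Δ(M) of max{ V_S(π,f) : f maximizes V_R(π,·) } (sender-preferred tie-breaking), and AP = sup over nonempty compact convex sets Π of kernels of max{ min_{π'∈Π} V_S(π',f) : f maximizes min_{π'∈Π} V_R(π',·) }. Then AP = BP. -/

import Mathlib

open Finset

/-- A probabilistic information structure (stochastic kernel): for each state `ω`,
`π ω` is a probability distribution over messages. -/
def IsKernel {Ω M : Type*} [Fintype M] (π : Ω → M → ℝ) : Prop :=
  (∀ ω m, 0 ≤ π ω m) ∧ ∀ ω, ∑ m, π ω m = 1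

/-- A contingent plan: for each message `m`, `f m` is a probability distribution
over actions. -/
def IsPlan {M A : Type*} [Fintype A] (f : M → A → ℝ) : Prop :=
  (∀ m a, 0 ≤ f m a) ∧ ∀ m, ∑ a, f m a = 1

/-- Ex-ante expected payoff `V u (π, f) = Σ_{m,a,ω} f(m)(a) u(a,ω) π(m|ω) p₀(ω)`. -/
def V {Ω M A : Type*} [Fintype Ω] [Fintype M] [Fintype A]
    (p₀ : Ω → ℝ) (u : A → Ω → ℝ) (π : Ω → M → ℝ) (f : M → A → ℝ) : ℝ :=
  ∑ m, ∑ a, ∑ ω, f m a * u a ω * π ω m * p₀ ω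

section AuxStmt3


variable {Ω M A : Type*} [Fintype Ω] [Fintype M] [Fintype A]

/-- coefficient of action `a` after message `m` -/
def cf (p₀ : Ω → ℝ) (u : A → Ω → ℝ) (π : Ω → M → ℝ) (m : M) (a : A) : ℝ :=
  ∑ ω, u a ω * π ω m * p₀ ω

lemma V_eq_cf (p₀ : Ω → ℝ) (u : A → Ω → ℝ) (π : Ω → M → ℝ) (f : M → A → ℝ) :
    V p₀ u π f = ∑ m, ∑ a, f m a * cf p₀ u π m a := by
  unfold V cf
  refine sum_congr rfl fun m _ => sum_congr rfl fun a _ => ?_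
  rw [Finset.mul_sum]
  exact sum_congr rfl fun ω _ => by ring

open Classical in
/-- pure plan induced by `g : M → A` -/
noncomputable def pp (g : M → A) : M → A → ℝ := fun m a => if a = g m then 1 else 0

lemma isPlan_pp (g : M → A) : IsPlan (pp g) := by
  classical
  constructor
  · intro m a; unfold pp; split <;> norm_num
  · intro m; simp [pp]

lemma V_pp (p₀ : Ω → ℝ) (u : A → Ω → ℝ) (π : Ω → M → ℝ) (g : M → A) :
    V p₀ u π (pp g) = ∑ m, cf p₀ u π m (g m) := by
  classical
  rw [V_eq_cf]
  refine sum_congr rfl fun m _ => ?_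
  simp [pp, ite_mul]

lemma V_add_pi (p₀ : Ω → ℝ) (u : A → Ω → ℝ) (π π' : Ω → M → ℝ) (f : M → A → ℝ) :
    V p₀ u (π + π') f = V p₀ u π f + V p₀ u π' f := by
  unfold V
  rw [← Finset.sum_add_distrib]
  refine sum_congr rfl fun m _ => ?_
  rw [← Finset.sum_add_distrib]
  refine sum_congr rfl fun a _ => ?_
  rw [← Finset.sum_add_distrib]
  refine sum_congr rfl fun ω _ => ?_
  simp only [Pi.add_apply]
  ring

lemma V_smul_pi (p₀ : Ω → ℝ) (u : A → Ω → ℝ) (c : ℝ) (π : Ω → M → ℝ) (f : M → A → ℝ) :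
    V p₀ u (c • π) f = c * V p₀ u π f := by
  unfold V
  rw [Finset.mul_sum]
  refine sum_congr rfl fun m _ => ?_
  rw [Finset.mul_sum]
  refine sum_congr rfl fun a _ => ?_
  rw [Finset.mul_sum]
  refine sum_congr rfl fun ω _ => ?_
  simp only [Pi.smul_apply, smul_eq_mul]
  ring

lemma V_sum_f {ι : Type*} [Fintype ι] (p₀ : Ω → ℝ) (u : A → Ω → ℝ) (π : Ω → M → ℝ)
    (lam : ι → ℝ) (F : ι → M → A → ℝ) :
    V p₀ u π (fun m a => ∑ g, lam g * F g m a) = ∑ g, lam g * V p₀ u π (F g) := by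
  simp only [V_eq_cf, Finset.mul_sum, Finset.sum_mul]
  rw [show (∑ g, ∑ m, ∑ a, lam g * (F g m a * cf p₀ u π m a))
      = ∑ m, ∑ g, ∑ a, lam g * (F g m a * cf p₀ u π m a) from Finset.sum_comm]
  refine sum_congr rfl fun m _ => ?_
  rw [show (∑ g, ∑ a, lam g * (F g m a * cf p₀ u π m a))
      = ∑ a, ∑ g, lam g * (F g m a * cf p₀ u π m a) from Finset.sum_comm]
  refine sum_congr rfl fun a _ => sum_congr rfl fun g _ => by ring

lemma continuous_V_pi (p₀ : Ω → ℝ) (u : A → Ω → ℝ) (f : M → A → ℝ) :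
    Continuous fun π : Ω → M → ℝ => V p₀ u π f := by
  unfold V
  refine continuous_finset_sum _ fun m _ => continuous_finset_sum _ fun a _ =>
    continuous_finset_sum _ fun ω _ => ?_
  have h : Continuous fun π : Ω → M → ℝ => π ω m :=
    (continuous_apply m).comp (continuous_apply ω)
  exact ((continuous_const.mul h).mul continuous_const)

lemma abs_V_le (p₀ : Ω → ℝ) (hp₀ : ∀ ω, 0 < p₀ ω) (hp₀1 : ∑ ω, p₀ ω = 1)
    (u : A → Ω → ℝ) {π : Ω → M → ℝ} {f : M → A → ℝ}
    (hπ : IsKernel π) (hf : IsPlan f) :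
    |V p₀ u π f| ≤ ∑ a, ∑ ω, |u a ω| := by
  have hp0le : ∀ ω, p₀ ω ≤ 1 := by
    intro ω
    rw [← hp₀1]
    exact Finset.single_le_sum (fun i _ => (hp₀ i).le) (mem_univ ω)
  have hfle : ∀ m a, f m a ≤ 1 := by
    intro m a
    rw [← hf.2 m]
    exact Finset.single_le_sum (fun i _ => hf.1 m i) (mem_univ a)
  have step1 : |V p₀ u π f| ≤ ∑ m, ∑ a, ∑ ω, |u a ω| * (π ω m * p₀ ω) := by
    refine (Finset.abs_sum_le_sum_abs _ _).trans (Finset.sum_le_sum fun m _ => ?_)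
    refine (Finset.abs_sum_le_sum_abs _ _).trans (Finset.sum_le_sum fun a _ => ?_)
    refine (Finset.abs_sum_le_sum_abs _ _).trans (Finset.sum_le_sum fun ω _ => ?_)
    have h1 : |f m a * u a ω * π ω m * p₀ ω| = f m a * |u a ω| * π ω m * p₀ ω := by
      rw [abs_mul, abs_mul, abs_mul, abs_of_nonneg (hf.1 m a),
        abs_of_nonneg (hπ.1 ω m), abs_of_nonneg (hp₀ ω).le]
    rw [h1]
    have := mul_le_mul_of_nonneg_right (mul_le_mul_of_nonneg_right
      (mul_le_mul_of_nonneg_right (hfle m a) (abs_nonneg (u a ω))) (hπ.1 ω m)) (hp₀ ω).le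
    calc f m a * |u a ω| * π ω m * p₀ ω ≤ 1 * |u a ω| * π ω m * p₀ ω := this
      _ = |u a ω| * (π ω m * p₀ ω) := by ring
  refine step1.trans ?_
  rw [show (∑ m, ∑ a, ∑ ω, |u a ω| * (π ω m * p₀ ω))
      = ∑ a, ∑ m, ∑ ω, |u a ω| * (π ω m * p₀ ω) from Finset.sum_comm]
  refine Finset.sum_le_sum fun a _ => ?_
  rw [show (∑ m, ∑ ω, |u a ω| * (π ω m * p₀ ω))
      = ∑ ω, ∑ m, |u a ω| * (π ω m * p₀ ω) from Finset.sum_comm]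
  refine Finset.sum_le_sum fun ω _ => ?_
  have : ∑ m, |u a ω| * (π ω m * p₀ ω) = |u a ω| * p₀ ω := by
    rw [← Finset.mul_sum, ← Finset.sum_mul, hπ.2 ω, one_mul]
  rw [this]
  calc |u a ω| * p₀ ω ≤ |u a ω| * 1 :=
        mul_le_mul_of_nonneg_left (hp0le ω) (abs_nonneg _)
    _ = |u a ω| := mul_one _

/-- Any plan is weakly dominated by some pure plan against a fixed `π`. -/
lemma V_le_sup_pp [Nonempty A] [DecidableEq M] (p₀ : Ω → ℝ) (u : A → Ω → ℝ) (π : Ω → M → ℝ)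
    {f' : M → A → ℝ} (hf' : IsPlan f') :
    V p₀ u π f' ≤ univ.sup' univ_nonempty (fun g : M → A => V p₀ u π (pp g)) := by
  classical
  have hmax : ∀ m : M, ∃ b : A, ∀ a : A, cf p₀ u π m a ≤ cf p₀ u π m b := by
    intro m
    obtain ⟨b, _, hb⟩ := Finset.exists_max_image univ (cf p₀ u π m)
      ⟨Classical.arbitrary A, mem_univ _⟩
    exact ⟨b, fun a => hb a (mem_univ a)⟩
  choose gg hgg using hmax
  have h1 : V p₀ u π f' ≤ V p₀ u π (pp gg) := by
    rw [V_eq_cf, V_pp]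
    refine Finset.sum_le_sum fun m _ => ?_
    calc ∑ a, f' m a * cf p₀ u π m a
        ≤ ∑ a, f' m a * cf p₀ u π m (gg m) :=
          Finset.sum_le_sum fun a _ =>
            mul_le_mul_of_nonneg_left (hgg m a) (hf'.1 m a)
      _ = (∑ a, f' m a) * cf p₀ u π m (gg m) := by rw [Finset.sum_mul]
      _ = cf p₀ u π m (gg m) := by rw [hf'.2 m, one_mul]
  exact h1.trans (Finset.le_sup' (fun g : M → A => V p₀ u π (pp g)) (mem_univ gg))

/-- Key lemma: from any ambiguous device with MEU-optimal plan `f`, extract a single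
Bayesian kernel against which `f` is optimal and which gives the sender at least
the ambiguous value. -/
lemma exists_bayesian [Nonempty A] (p₀ : Ω → ℝ) (hp₀ : ∀ ω, 0 < p₀ ω) (hp₀1 : ∑ ω, p₀ ω = 1)
    (uR uS : A → Ω → ℝ) (AIS : Set (Ω → M → ℝ)) (f : M → A → ℝ)
    (hker : ∀ π ∈ AIS, IsKernel π) (hne : AIS.Nonempty) (hcpt : IsCompact AIS)
    (hcvx : Convex ℝ AIS) (hplan : IsPlan f)
    (hopt : ∀ f', IsPlan f' →
      sInf ((fun π => V p₀ uR π f') '' AIS) ≤ sInf ((fun π => V p₀ uR π f) '' AIS)) :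
    ∃ π₁ : Ω → M → ℝ, IsKernel π₁ ∧ (∀ f', IsPlan f' → V p₀ uR π₁ f' ≤ V p₀ uR π₁ f) ∧
      sInf ((fun π => V p₀ uS π f) '' AIS) ≤ V p₀ uS π₁ f := by
  classical
  set Ψ : (Ω → M → ℝ) → ℝ :=
    fun π => univ.sup' univ_nonempty (fun g : M → A => V p₀ uR π (pp g)) with hΨ
  have hΨcont : Continuous Ψ :=
    Continuous.finset_sup'_apply univ_nonempty fun g _ => continuous_V_pi p₀ uR (pp g)
  obtain ⟨π₁, hπ₁mem, hmin⟩ := hcpt.exists_isMinOn hne hΨcont.continuousOn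
  set w : ℝ := Ψ π₁ with hw
  have hminw : ∀ π ∈ AIS, w ≤ Ψ π := fun π hπ => hmin hπ
  -- the linear map π ↦ (V_R(π, pure g))_g
  set Φ : (Ω → M → ℝ) →ₗ[ℝ] ((M → A) → ℝ) :=
    { toFun := fun π g => V p₀ uR π (pp g)
      map_add' := fun π π' => funext fun g => V_add_pi p₀ uR π π' (pp g)
      map_smul' := fun c π => funext fun g => by
        simpa using V_smul_pi p₀ uR c π (pp g) } with hΦ
  set s : Set ((M → A) → ℝ) := {z | ∀ g, z g < w} with hsdef
  have hseq : s = Set.pi Set.univ (fun _ => Set.Iio w) := by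
    ext z; simp [hsdef, Set.mem_pi]
  have hsopen : IsOpen s := by
    rw [hseq]; exact isOpen_set_pi Set.finite_univ fun _ _ => isOpen_Iio
  have hsconv : Convex ℝ s := by
    rw [hseq]; exact convex_pi fun _ _ => convex_Iio w
  have htconv : Convex ℝ (Φ '' AIS) := hcvx.linear_image Φ
  have hdisj : Disjoint s (Φ '' AIS) := by
    rw [Set.disjoint_left]
    rintro z hz ⟨π, hπ, rfl⟩
    have h1 : Ψ π < w := by
      rw [hΨ]
      exact (Finset.sup'_lt_iff univ_nonempty).2 fun g _ => hz g
    exact absurd (hminw π hπ) (not_le.2 h1)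
  obtain ⟨L, u, hLs, hLt⟩ := geometric_hahn_banach_open hsconv hsopen htconv hdisj
  set lam : (M → A) → ℝ := fun g => L (Pi.single g 1) with hlam
  have hrep : ∀ z : (M → A) → ℝ, L z = ∑ g, z g * lam g := by
    intro z
    have hz : (∑ g, z g • (Pi.single g 1 : (M → A) → ℝ)) = z := by
      ext g'
      simp [Finset.sum_apply, Pi.single_apply]
    conv_lhs => rw [← hz]
    rw [map_sum]
    simp only [map_smul, smul_eq_mul]
    rfl
  have hs' : ∀ z : (M → A) → ℝ, (∀ g, z g < w) → ∑ g, z g * lam g < u := by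
    intro z hz
    have := hLs z hz
    rwa [hrep] at this
  have ht' : ∀ π ∈ AIS, u ≤ ∑ g, V p₀ uR π (pp g) * lam g := by
    intro π hπ
    have := hLt _ (Set.mem_image_of_mem Φ hπ)
    rwa [hrep] at this
  have hlamnn : ∀ g, 0 ≤ lam g := by
    intro g₀
    by_contra hneg
    push_neg at hneg
    have hS1 : ∑ g, (fun _ : M → A => w - 1) g * lam g < u := hs' _ fun g => by norm_num
    simp only at hS1
    set t0 : ℝ := (u - ∑ g, (w - 1) * lam g) / (-lam g₀) with ht0
    have ht0pos : 0 < t0 := div_pos (by linarith) (by linarith)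
    set z : (M → A) → ℝ := fun g => if g = g₀ then w - 1 - t0 else w - 1 with hzd
    have hzlt : ∀ g, z g < w := by
      intro g; rw [hzd]; dsimp only; split <;> linarith
    have hsum : ∑ g, z g * lam g = (∑ g, (w - 1) * lam g) - t0 * lam g₀ := by
      have : ∀ g, z g * lam g
          = (w - 1) * lam g + (if g = g₀ then -t0 * lam g₀ else 0) := by
        intro g
        by_cases h : g = g₀ <;> simp [hzd, h] <;> ring
      rw [Finset.sum_congr rfl fun g _ => this g, Finset.sum_add_distrib,
        Finset.sum_ite_eq' univ g₀ (fun _ => -t0 * lam g₀)]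
      simp; ring
    have hlt := hs' z hzlt
    rw [hsum] at hlt
    have hc : t0 * (-lam g₀) = u - ∑ g, (w - 1) * lam g := by
      rw [ht0]
      exact div_mul_cancel₀ _ (by linarith : (-lam g₀) ≠ 0)
    nlinarith [hlt, hc]
  set Λ : ℝ := ∑ g, lam g with hΛ
  have hΛnn : 0 ≤ Λ := Finset.sum_nonneg fun g _ => hlamnn g
  have hΛpos : 0 < Λ := by
    rcases hΛnn.lt_or_eq with h | h
    · exact h
    · exfalso
      have hall : ∀ g ∈ (univ : Finset (M → A)), lam g = 0 :=
        (Finset.sum_eq_zero_iff_of_nonneg fun g _ => hlamnn g).1 h.symm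
      obtain ⟨π₀, hπ₀⟩ := hne
      have h1 := ht' π₀ hπ₀
      have h2 : ∑ g, (fun _ : M → A => w - 1) g * lam g < u := hs' _ fun g => by norm_num
      simp only [hall _ (mem_univ _), mul_zero, Finset.sum_const_zero] at h1 h2
      linarith
  have hwu : w * Λ ≤ u := by
    by_contra hcon
    push_neg at hcon
    set δ : ℝ := (w * Λ - u) / (2 * Λ) with hδ
    have hδpos : 0 < δ := div_pos (by linarith) (by linarith)
    have h1 : ∑ g, (fun _ : M → A => w - δ) g * lam g < u := hs' _ fun g => by
      show w - δ < w; linarith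
    have h2 : ∑ g, (fun _ : M → A => w - δ) g * lam g = (w - δ) * Λ := by
      rw [hΛ, Finset.mul_sum]
    rw [h2] at h1
    have h3 : δ * Λ = (w * Λ - u) / 2 := by
      rw [hδ]; field_simp
    nlinarith
  -- the mixed plan
  set fstar : M → A → ℝ := fun m a => ∑ g, (lam g / Λ) * pp g m a with hfstar
  have hfsplan : IsPlan fstar := by
    constructor
    · intro m a
      exact Finset.sum_nonneg fun g _ =>
        mul_nonneg (div_nonneg (hlamnn g) hΛnn) ((isPlan_pp g).1 m a)
    · intro m
      rw [hfstar]
      rw [Finset.sum_comm]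
      have : ∀ g : M → A, ∑ a, lam g / Λ * pp g m a = lam g / Λ := by
        intro g
        rw [← Finset.mul_sum, (isPlan_pp g).2 m, mul_one]
      rw [Finset.sum_congr rfl fun g _ => this g, ← Finset.sum_div, ← hΛ,
        div_self hΛpos.ne']
  have hVfstar : ∀ π ∈ AIS, w ≤ V p₀ uR π fstar := by
    intro π hπ
    rw [hfstar, V_sum_f]
    have h1 : ∑ g, lam g / Λ * V p₀ uR π (pp g)
        = (∑ g, V p₀ uR π (pp g) * lam g) / Λ := by
      rw [Finset.sum_div]
      exact Finset.sum_congr rfl fun g _ => by ring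
    rw [h1, le_div_iff₀ hΛpos]
    calc w * Λ ≤ u := hwu
      _ ≤ _ := ht' π hπ
  -- bounded below images
  have hbddR : ∀ f0 : M → A → ℝ, IsPlan f0 →
      BddBelow ((fun π => V p₀ uR π f0) '' AIS) := by
    intro f0 hf0
    refine ⟨-(∑ a, ∑ ω, |uR a ω|), ?_⟩
    rintro x ⟨π, hπ, rfl⟩
    have := abs_V_le p₀ hp₀ hp₀1 uR (hker π hπ) hf0
    exact neg_le_of_abs_le this
  have hbddS : BddBelow ((fun π => V p₀ uS π f) '' AIS) := by
    refine ⟨-(∑ a, ∑ ω, |uS a ω|), ?_⟩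
    rintro x ⟨π, hπ, rfl⟩
    exact neg_le_of_abs_le (abs_V_le p₀ hp₀ hp₀1 uS (hker π hπ) hplan)
  have hle1 : w ≤ sInf ((fun π => V p₀ uR π fstar) '' AIS) :=
    le_csInf (hne.image _) (by rintro x ⟨π, hπ, rfl⟩; exact hVfstar π hπ)
  have hle2 : w ≤ sInf ((fun π => V p₀ uR π f) '' AIS) :=
    hle1.trans (hopt fstar hfsplan)
  have hle3 : sInf ((fun π => V p₀ uR π f) '' AIS) ≤ V p₀ uR π₁ f :=
    csInf_le (hbddR f hplan) ⟨π₁, hπ₁mem, rfl⟩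
  refine ⟨π₁, hker π₁ hπ₁mem, ?_, ?_⟩
  · intro f' hf'
    calc V p₀ uR π₁ f' ≤ Ψ π₁ := V_le_sup_pp p₀ uR π₁ hf'
      _ = w := hw.symm
      _ ≤ V p₀ uR π₁ f := hle2.trans hle3
  · exact csInf_le hbddS ⟨π₁, hπ₁mem, rfl⟩


end AuxStmt3

/-- Theorem 1 of the paper: with an MEU sender and an MEU dynamically consistent
receiver (sender-preferred tie-breaking), the sender's value from ambiguous
persuasion (`AP`) equals her value from Bayesian persuasion (`BP`). -/
theorem stmt_3 {Ω M A : Type*} [Fintype Ω] [Fintype M] [Fintype A]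
    [Nonempty A]
    (p₀ : Ω → ℝ) (hp₀ : ∀ ω, 0 < p₀ ω) (hp₀1 : ∑ ω, p₀ ω = 1)
    (uR uS : A → Ω → ℝ)
    (BP AP : ℝ)
    (hBP : BP = sSup {v : ℝ | ∃ (π : Ω → M → ℝ) (f : M → A → ℝ), IsKernel π ∧ IsPlan f ∧
      (∀ f', IsPlan f' → V p₀ uR π f' ≤ V p₀ uR π f) ∧
      v = V p₀ uS π f})
    (hAP : AP = sSup {v : ℝ | ∃ (AIS : Set (Ω → M → ℝ)) (f : M → A → ℝ),
      (∀ π ∈ AIS, IsKernel π) ∧ AIS.Nonempty ∧ IsCompact AIS ∧ Convex ℝ AIS ∧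
      IsPlan f ∧
      (∀ f', IsPlan f' →
        sInf ((fun π => V p₀ uR π f') '' AIS) ≤ sInf ((fun π => V p₀ uR π f) '' AIS)) ∧
      v = sInf ((fun π => V p₀ uS π f) '' AIS)}) :
    AP = BP := by
  classical
  rw [hAP, hBP]
  set SB : Set ℝ := {v : ℝ | ∃ (π : Ω → M → ℝ) (f : M → A → ℝ), IsKernel π ∧ IsPlan f ∧
      (∀ f', IsPlan f' → V p₀ uR π f' ≤ V p₀ uR π f) ∧
      v = V p₀ uS π f} with hSB
  set SA : Set ℝ := {v : ℝ | ∃ (AIS : Set (Ω → M → ℝ)) (f : M → A → ℝ),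
      (∀ π ∈ AIS, IsKernel π) ∧ AIS.Nonempty ∧ IsCompact AIS ∧ Convex ℝ AIS ∧
      IsPlan f ∧
      (∀ f', IsPlan f' →
        sInf ((fun π => V p₀ uR π f') '' AIS) ≤ sInf ((fun π => V p₀ uR π f) '' AIS)) ∧
      v = sInf ((fun π => V p₀ uS π f) '' AIS)} with hSA
  have hsub : SB ⊆ SA := by
    rintro v ⟨π, f, hk, hf, hopt, rfl⟩
    refine ⟨{π}, f, ?_, ⟨π, rfl⟩, isCompact_singleton, convex_singleton π, hf, ?_, ?_⟩
    · intro π' hπ'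
      rw [Set.mem_singleton_iff] at hπ'
      subst hπ'
      exact hk
    · intro f' hf'
      simp only [Set.image_singleton, csInf_singleton]
      exact hopt f' hf'
    · simp only [Set.image_singleton, csInf_singleton]
  have hub : ∀ v ∈ SA, v ≤ ∑ a, ∑ ω, |uS a ω| := by
    rintro v ⟨AIS, f, hker, hne, hcpt, hcvx, hplan, hopt, rfl⟩
    obtain ⟨π₀, hπ₀⟩ := hne
    have hbdd : BddBelow ((fun π => V p₀ uS π f) '' AIS) := by
      refine ⟨-(∑ a, ∑ ω, |uS a ω|), ?_⟩
      rintro x ⟨π, hπ, rfl⟩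
      exact neg_le_of_abs_le (abs_V_le p₀ hp₀ hp₀1 uS (hker π hπ) hplan)
    calc sInf ((fun π => V p₀ uS π f) '' AIS) ≤ V p₀ uS π₀ f :=
          csInf_le hbdd ⟨π₀, hπ₀, rfl⟩
      _ ≤ ∑ a, ∑ ω, |uS a ω| :=
          le_of_abs_le (abs_V_le p₀ hp₀ hp₀1 uS (hker π₀ hπ₀) hplan)
  have hAtoB : ∀ v ∈ SA, ∃ v' ∈ SB, v ≤ v' := by
    rintro v ⟨AIS, f, hker, hne, hcpt, hcvx, hplan, hopt, rfl⟩
    obtain ⟨π₁, hk1, hopt1, hle⟩ :=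
      exists_bayesian p₀ hp₀ hp₀1 uR uS AIS f hker hne hcpt hcvx hplan hopt
    exact ⟨V p₀ uS π₁ f, ⟨π₁, f, hk1, hplan, hopt1, rfl⟩, hle⟩
  rcases Set.eq_empty_or_nonempty SA with hSAe | hSAne
  · have hSBe : SB = ∅ := Set.eq_empty_of_subset_empty (hSAe ▸ hsub)
    rw [hSAe, hSBe]
  · obtain ⟨v₀, hv₀⟩ := hSAne
    obtain ⟨v₀', hv₀', _⟩ := hAtoB v₀ hv₀
    have hbddA : BddAbove SA := ⟨∑ a, ∑ ω, |uS a ω|, hub⟩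
    have hbddB : BddAbove SB := BddAbove.mono hsub hbddA
    apply le_antisymm
    · refine csSup_le ⟨v₀, hv₀⟩ fun v hv => ?_
      obtain ⟨v', hv', hle⟩ := hAtoB v hv
      exact hle.trans (le_csSup hbddB hv')
    · exact csSup_le_csSup hbddA ⟨v₀', hv₀'⟩ hsub
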